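/- A continuous action φ: G × X → X on a compact metric space has the persistent shadowing property if and only if every point of X is a persistent shadowable point, i.e., PSh(φ) = X. -/
import Mathlib


open MeasureTheory

def ContGroupAction (G : Type*) [Group G] (X : Type*) [MetricSpace X] (φ : G → X → X) : Prop :=
  (∀ g : G, Continuous (φ g)) ∧ (∀ g h : G, ∀ x : X, φ (g * h) x = φ g (φ h x)) ∧
    (∀ x : X, φ (1 : G) x = x)

def IsPseudoOrbit {G : Type*} [Group G] {X : Type*} [MetricSpace X]
    (S : Set G) (ψ : G → X → X) (δ : ℝ) (f : G → X) : Prop :=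
  ∀ s ∈ S, ∀ g : G, dist (f (s * g)) (ψ s (f g)) < δ

def CloseActions {G : Type*} [Group G] {X : Type*} [MetricSpace X]
    (S : Set G) (φ ψ : G → X → X) (δ : ℝ) : Prop :=
  ∀ s ∈ S, ∀ x : X, dist (φ s x) (ψ s x) < δ

def PersistentShadowing {G : Type*} [Group G] {X : Type*} [MetricSpace X]
    (S : Set G) (φ : G → X → X) : Prop :=
  ∀ ε > (0:ℝ), ∃ δ > (0:ℝ), ∀ ψ : G → X → X, ContGroupAction G X ψ → CloseActions S φ ψ δ →
    ∀ f : G → X, IsPseudoOrbit S ψ δ f → ∃ p : X, ∀ g : G, dist (f g) (ψ g p) < ε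

def Shadowing {G : Type*} [Group G] {X : Type*} [MetricSpace X]
    (S : Set G) (φ : G → X → X) : Prop :=
  ∀ ε > (0:ℝ), ∃ δ > (0:ℝ), ∀ f : G → X, IsPseudoOrbit S φ δ f →
    ∃ p : X, ∀ g : G, dist (f g) (φ g p) < ε

def PShSet {G : Type*} [Group G] {X : Type*} [MetricSpace X]
    (S : Set G) (φ : G → X → X) (δ ε : ℝ) : Set X :=
  {x | ∀ ψ : G → X → X, ContGroupAction G X ψ → CloseActions S φ ψ δ →
    ∀ f : G → X, IsPseudoOrbit S ψ δ f → f 1 = x →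
      ∃ p : X, ∀ g : G, dist (f g) (ψ g p) < ε}

def PShPoint {G : Type*} [Group G] {X : Type*} [MetricSpace X]
    (S : Set G) (φ : G → X → X) (x : X) : Prop :=
  ∀ ε > (0:ℝ), ∃ δ > (0:ℝ), x ∈ PShSet S φ δ ε

def ShPoint {G : Type*} [Group G] {X : Type*} [MetricSpace X]
    (S : Set G) (φ : G → X → X) (x : X) : Prop :=
  ∀ ε > (0:ℝ), ∃ δ > (0:ℝ), ∀ f : G → X, IsPseudoOrbit S φ δ f → f 1 = x →
    ∃ p : X, ∀ g : G, dist (f g) (φ g p) < ε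

def UPersisBetaPoint {G : Type*} [Group G] {X : Type*} [MetricSpace X]
    (S : Set G) (φ : G → X → X) (x : X) : Prop :=
  ∀ ε > (0:ℝ), ∃ δ > (0:ℝ), ∀ ψ : G → X → X, ContGroupAction G X ψ → CloseActions S φ ψ δ →
    ∀ x' : X, dist x' x < δ → ∃ y : X, ∀ g : G, dist (φ g x') (ψ g y) < ε

def BetaPersistent {G : Type*} [Group G] {X : Type*} [MetricSpace X]
    (S : Set G) (φ : G → X → X) : Prop :=
  ∀ ε > (0:ℝ), ∃ δ > (0:ℝ), ∀ ψ : G → X → X, ContGroupAction G X ψ → CloseActions S φ ψ δ →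
    ∀ x : X, ∃ y : X, ∀ g : G, dist (φ g x) (ψ g y) < ε

def CompatiblePSh {G : Type*} [Group G] {X : Type*} [MetricSpace X] [MeasurableSpace X]
    (S : Set G) (φ : G → X → X) (μ : Measure X) : Prop :=
  ∀ ε > (0:ℝ), ∃ δ > (0:ℝ), ∀ A : Set X, MeasurableSet A → 0 < μ A →
    (A ∩ PShSet S φ δ ε).Nonempty

def MeasSupp {X : Type*} [MetricSpace X] [MeasurableSpace X] (μ : Measure X) : Set X :=
  {x | ∀ U : Set X, IsOpen U → x ∈ U → 0 < μ U}


lemma pshset_mono {G : Type*} [Group G] {X : Type*} [MetricSpace X]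
    (S : Set G) (φ : G → X → X) {δ δ' ε : ℝ} (h : δ' ≤ δ) :
    PShSet S φ δ ε ⊆ PShSet S φ δ' ε := by
  intro x hx ψ hψ hc f hf hf1
  exact hx ψ hψ (fun s hs y => lt_of_lt_of_le (hc s hs y) h) f
    (fun s hs g => lt_of_lt_of_le (hf s hs g) h) hf1

lemma exists_unif_mod {ι : Type*} {X : Type*} [MetricSpace X] [CompactSpace X]
    {S : Set ι} (hS : S.Finite) {φ : ι → X → X} (hφ : ∀ i, Continuous (φ i))
    {c : ℝ} (hc : 0 < c) :
    ∃ e > 0, ∀ s ∈ S, ∀ a b : X, dist a b < e → dist (φ s a) (φ s b) < c := by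
  have key : ∀ s : ι, ∃ e > 0, ∀ a b : X, dist a b < e → dist (φ s a) (φ s b) < c := by
    intro s
    obtain ⟨e, he, hmod⟩ := Metric.uniformContinuous_iff.mp
      (CompactSpace.uniformContinuous_of_continuous (hφ s)) c hc
    exact ⟨e, he, fun a b hab => hmod hab⟩
  choose m hm hmod using key
  rcases S.eq_empty_or_nonempty with rfl | hne
  · exact ⟨1, one_pos, by simp⟩
  · have hTne : hS.toFinset.Nonempty := by rwa [Set.Finite.toFinset_nonempty]
    refine ⟨hS.toFinset.inf' hTne m, ?_, ?_⟩
    · rw [gt_iff_lt, Finset.lt_inf'_iff]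
      exact fun b _ => hm b
    · intro s hs a b hab
      exact hmod s a b (lt_of_lt_of_le hab (Finset.inf'_le m (hS.mem_toFinset.mpr hs)))

theorem stmt13 {G : Type*} [Group G] {X : Type*} [MetricSpace X] [CompactSpace X]
    (S : Set G) (hSfin : S.Finite) (hSsym : ∀ s ∈ S, s⁻¹ ∈ S)
    (hSgen : Subgroup.closure S = ⊤)
    (φ : G → X → X) (hφ : ContGroupAction G X φ) :
    PersistentShadowing S φ ↔ ∀ x : X, PShPoint S φ x := by
  classical
  constructor
  · intro h x ε hε
    obtain ⟨δ, hδ, H⟩ := h ε hε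
    exact ⟨δ, hδ, fun ψ hψ hc f hf _ => H ψ hψ hc f hf⟩
  · intro h ε hε
    rcases isEmpty_or_nonempty X with hX | hX
    · exact ⟨1, one_pos, fun ψ _ _ f _ => (IsEmpty.false (f 1)).elim⟩
    -- choose δ for each point
    have hx : ∀ x : X, ∃ dd > 0, dd ≤ ε / 2 ∧ x ∈ PShSet S φ dd (ε / 2) := by
      intro x
      obtain ⟨dd, hdd, hmem⟩ := h x (ε / 2) (by linarith)
      exact ⟨min dd (ε / 2), lt_min hdd (by linarith), min_le_right _ _,
        pshset_mono S φ (min_le_left _ _) hmem⟩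
    choose d hd hdε hdmem using hx
    -- choose continuity moduli
    have hx2 : ∀ x : X, ∃ e > 0, e ≤ d x / 4 ∧
        ∀ s ∈ S, ∀ a b : X, dist a b < e → dist (φ s a) (φ s b) < d x / 4 := by
      intro x
      obtain ⟨e, he, hP⟩ := exists_unif_mod hSfin hφ.1 (c := d x / 4) (by linarith [hd x])
      exact ⟨min e (d x / 4), lt_min he (by linarith [hd x]), min_le_right _ _,
        fun s hs a b hab => hP s hs a b (lt_of_lt_of_le hab (min_le_left _ _))⟩
    choose η hη hη4 hηmod using hx2
    -- compactness
    obtain ⟨t, ht⟩ := IsCompact.elim_finite_subcover (isCompact_univ (X := X))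
      (fun x => Metric.ball x (η x)) (fun x => Metric.isOpen_ball)
      (by
        intro x _
        exact Set.mem_iUnion.mpr ⟨x, Metric.mem_ball_self (hη x)⟩)
    have htne : t.Nonempty := by
      rcases Finset.eq_empty_or_nonempty t with rfl | hne
      · exfalso
        obtain ⟨x⟩ := hX
        have := ht (Set.mem_univ x)
        simpa using this
      · exact hne
    refine ⟨t.inf' htne (fun i => d i / 4), ?_, ?_⟩
    · rw [gt_iff_lt, Finset.lt_inf'_iff]
      intro i _
      linarith [hd i]
    · intro ψ hψ hclose f hf
      set δ := t.inf' htne (fun i => d i / 4) with hδdef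
      obtain ⟨i, hit, hball⟩ : ∃ i ∈ t, f 1 ∈ Metric.ball i (η i) := by
        have := ht (Set.mem_univ (f 1))
        simpa using this
      have hball' : dist (f 1) i < η i := hball
      have hδi : δ ≤ d i / 4 := Finset.inf'_le _ hit
      set f' : G → X := fun g => if g = 1 then i else f g with hf'def
      have hf'1 : f' 1 = i := if_pos rfl
      have hclose' : CloseActions S φ ψ (d i) :=
        fun s hs y => lt_of_lt_of_le (hclose s hs y) (by linarith [hd i])
      have hpo : IsPseudoOrbit S ψ (d i) f' := by
        intro s hs g
        by_cases hg : g = 1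
        · subst hg
          rw [mul_one]
          by_cases hs1 : s = 1
          · subst hs1
            rw [hψ.2.2 (f' 1)]
            simpa using hd i
          · have hfs : f' s = f s := if_neg hs1
            rw [hfs, hf'1]
            have h1 : dist (f s) (ψ s (f 1)) < δ := by
              have := hf s hs 1
              rwa [mul_one] at this
            have h2 : dist (ψ s (f 1)) (φ s (f 1)) < δ := by
              rw [dist_comm]; exact hclose s hs (f 1)
            have h3 : dist (φ s (f 1)) (φ s i) < d i / 4 :=
              hηmod i s hs (f 1) i hball'
            have h4 : dist (φ s i) (ψ s i) < δ := hclose s hs i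
            have t4 := dist_triangle4 (f s) (ψ s (f 1)) (φ s (f 1)) (φ s i)
            have t3 := dist_triangle (f s) (φ s i) (ψ s i)
            linarith
        · by_cases hsg : s * g = 1
          · have e1 : f' (s * g) = i := by rw [hsg]; exact hf'1
            have e2 : f' g = f g := if_neg hg
            rw [e1, e2]
            have h1 : dist (f 1) (ψ s (f g)) < δ := by
              have := hf s hs g
              rwa [hsg] at this
            have h2 : dist i (f 1) < η i := by rw [dist_comm]; exact hball'
            calc dist i (ψ s (f g)) ≤ dist i (f 1) + dist (f 1) (ψ s (f g)) :=
                dist_triangle _ _ _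
              _ < η i + δ := by linarith
              _ ≤ d i / 4 + d i / 4 := by linarith [hη4 i]
              _ < d i := by linarith [hd i]
          · have e1 : f' (s * g) = f (s * g) := if_neg hsg
            have e2 : f' g = f g := if_neg hg
            rw [e1, e2]
            exact lt_of_lt_of_le (hf s hs g) (by linarith [hd i])
      obtain ⟨p, hp⟩ := hdmem i ψ hψ hclose' f' hpo hf'1
      refine ⟨p, fun g => ?_⟩
      by_cases hg : g = 1
      · subst hg
        have h1 := hp 1
        rw [hf'1] at h1
        have h2 : d i / 4 ≤ ε / 8 := by linarith [hdε i]
        calc dist (f 1) (ψ 1 p) ≤ dist (f 1) i + dist i (ψ 1 p) := dist_triangle _ _ _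
          _ < η i + ε / 2 := by linarith
          _ ≤ ε := by linarith [hη4 i]
      · have h1 := hp g
        rw [show f' g = f g from if_neg hg] at h1
        linarith
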